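/- Let (R, m) be a Noetherian local ring and let R̂ be its m-adic completion. For every polynomial g ∈ R[t], the Dedekind–Mertens number of g over R equals the Dedekind–Mertens number of g over R̂: μ_R(g) = μ_{R̂}(g). -/

import Mathlib

open Polynomial

/-- The content ideal of a polynomial: the ideal generated by its coefficients. -/
noncomputable def cont {R : Type*} [CommRing R] (p : R[X]) : Ideal R :=
  Ideal.span (Set.range p.coeff)

/-- The minimal number of generators of an ideal. -/
noncomputable def mug {R : Type*} [CommRing R] (I : Ideal R) : ℕ :=
  sInf {n | ∃ x : Fin n → R, Ideal.span (Set.range x) = I}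

/-- The Dedekind--Mertens number of a polynomial. -/
noncomputable def dmNumber (R : Type*) [CommRing R] (g : R[X]) : ℕ :=
  sInf {k | 0 < k ∧ ∀ f : R[X], cont (f * g) * cont f ^ (k - 1) = cont f ^ k * cont g}

/-- The polarized Dedekind--Mertens number of a polynomial. -/
noncomputable def polDmNumber (R : Type*) [CommRing R] (g : R[X]) : ℕ :=
  sInf {k | 0 < k ∧ ∀ f : Fin k → R[X],
    (∑ i, cont (f i * g) * ∏ j ∈ Finset.univ.erase i, cont (f j)) =
      (∏ i, cont (f i)) * cont g}

/-- `x` is in the integral closure of the ideal `I`. -/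
def memIntCl {R : Type*} [CommRing R] (I : Ideal R) (x : R) : Prop :=
  ∃ k : ℕ, 0 < k ∧ ∃ a : ℕ → R, (∀ i, 1 ≤ i → i ≤ k → a i ∈ I ^ i) ∧
    x ^ k + ∑ i ∈ Finset.Icc 1 k, a i * x ^ (k - i) = 0

section ContLemmas
variable {A B : Type*} [CommRing A] [CommRing B]

lemma cont_map (σ : A →+* B) (p : A[X]) : cont (p.map σ) = (cont p).map σ := by
  unfold cont
  rw [Ideal.map_span]
  congr 1
  ext x
  constructor
  · rintro ⟨n, rfl⟩
    exact ⟨p.coeff n, ⟨n, rfl⟩, (coeff_map σ n).symm⟩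
  · rintro ⟨y, ⟨n, rfl⟩, rfl⟩
    exact ⟨n, coeff_map σ n⟩

lemma coeff_mem_cont (p : A[X]) (n : ℕ) : p.coeff n ∈ cont p :=
  Ideal.subset_span ⟨n, rfl⟩

lemma cont_mul_le (p q : A[X]) : cont (p * q) ≤ cont p * cont q := by
  unfold cont
  rw [Ideal.span_le]
  rintro x ⟨n, rfl⟩
  rw [coeff_mul]
  exact Ideal.sum_mem _ fun c _ ↦
    Ideal.mul_mem_mul (coeff_mem_cont p c.1) (coeff_mem_cont q c.2)

/-- The Dedekind–Mertens property for exponent `k`. -/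
def DM (A : Type*) [CommRing A] (g : A[X]) (k : ℕ) : Prop :=
  ∀ f : A[X], cont (f * g) * cont f ^ (k - 1) = cont f ^ k * cont g

lemma DM.map_surj {g : A[X]} {k : ℕ} (h : DM A g k) (σ : A →+* B)
    (hσ : Function.Surjective σ) : DM B (g.map σ) k := by
  intro f
  obtain ⟨f₀, rfl⟩ := Polynomial.map_surjective σ hσ f
  rw [← Polynomial.map_mul, cont_map, cont_map, cont_map, ← Ideal.map_pow, ← Ideal.map_pow,
    ← Ideal.map_mul, ← Ideal.map_mul, h f₀]

lemma DM.easy_le {g : A[X]} {k : ℕ} (hk : 0 < k) (f : A[X]) :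
    cont (f * g) * cont f ^ (k - 1) ≤ cont f ^ k * cont g := by
  calc cont (f * g) * cont f ^ (k - 1) ≤ (cont f * cont g) * cont f ^ (k - 1) :=
        Ideal.mul_mono_left (cont_mul_le f g)
    _ = cont f ^ k * cont g := by
        rw [mul_comm (cont f) (cont g), mul_assoc, ← pow_succ', Nat.sub_add_cancel hk, mul_comm]

end ContLemmas

section Krull
variable {A : Type*} [CommRing A] [IsNoetherianRing A] [IsLocalRing A]

/-- Every ideal of a Noetherian local ring is closed in the `m`-adic topology. -/
lemma closed_of_forall_sup {X Y : Ideal A}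
    (h : ∀ n : ℕ, Y ≤ X ⊔ IsLocalRing.maximalIdeal A ^ n) : Y ≤ X := by
  by_cases hX : X = ⊤
  · simp [hX]
  intro y hy
  set m := IsLocalRing.maximalIdeal A
  set π := Ideal.Quotient.mk X
  have hker : RingHom.ker π = X := Ideal.mk_ker
  haveI : Nontrivial (A ⧸ X) := Ideal.Quotient.nontrivial_iff.mpr hX
  haveI : IsLocalRing (A ⧸ X) := IsLocalRing.of_surjective' π Ideal.Quotient.mk_surjective
  have hmne : Ideal.map π m ≠ ⊤ := by
    intro htop
    have h1 : (1 : A) ∈ m ⊔ X := by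
      have := Ideal.comap_map_of_surjective π Ideal.Quotient.mk_surjective m
      rw [htop] at this
      have h2 : (1 : A) ∈ Ideal.comap π (⊤ : Ideal (A ⧸ X)) := trivial
      rw [this] at h2
      have hcb : Ideal.comap π (⊥ : Ideal (A ⧸ X)) = X := by
        ext a; simp only [Ideal.mem_comap, Submodule.mem_bot]; exact Ideal.Quotient.eq_zero_iff_mem
      rwa [hcb] at h2
    have hXm : X ≤ m := IsLocalRing.le_maximalIdeal hX
    have : m ⊔ X = m := sup_eq_left.mpr hXm
    rw [this] at h1
    exact (IsLocalRing.maximalIdeal.isMaximal A).ne_top (Ideal.eq_top_of_isUnit_mem _ h1 isUnit_one)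
  have hbot := Ideal.iInf_pow_eq_bot_of_isLocalRing (Ideal.map π m) hmne
  have : π y ∈ (⨅ i : ℕ, Ideal.map π m ^ i) := by
    rw [Submodule.mem_iInf]
    intro n
    have := h n hy
    rw [← Ideal.map_pow]
    rcases Submodule.mem_sup.mp this with ⟨a, ha, b, hb, rfl⟩
    have : π a = 0 := by rwa [← RingHom.mem_ker, hker]
    rw [map_add, this, zero_add]
    exact Ideal.mem_map_of_mem π hb
  rw [hbot] at this
  rwa [Submodule.mem_bot, ← RingHom.mem_ker, hker] at this

end Krull

section Completion

variable {R : Type*} [CommRing R] (I : Ideal R)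

open AdicCompletion

local notation "S" => AdicCompletion I R

/-- The kernel filtration of the adic completion. -/
noncomputable def Fker (n : ℕ) : Ideal S := RingHom.ker (evalₐ I n : S →+* R ⧸ I ^ n)

lemma mem_Fker {x : S} {n : ℕ} : x ∈ Fker I n ↔ evalₐ I n x = 0 := Iff.rfl

lemma Fker_zero : Fker I 0 = ⊤ := by
  rw [eq_top_iff]
  intro x _
  rw [mem_Fker]
  haveI : Subsingleton (R ⧸ I ^ 0) := by
    rw [Ideal.Quotient.subsingleton_iff, pow_zero, Ideal.one_eq_top]
  exact Subsingleton.elim _ _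

lemma evalₐ_surjective (n : ℕ) : Function.Surjective (evalₐ I n) := by
  intro y
  obtain ⟨r, rfl⟩ := Ideal.Quotient.mk_surjective y
  refine ⟨algebraMap R S r, ?_⟩
  rw [AlgHom.commutes]
  rfl

lemma mk_mem_Fker_iff (a : AdicCauchySequence I R) (n : ℕ) :
    AdicCompletion.mk I R a ∈ Fker I n ↔ a.val n ∈ I ^ n := by
  rw [mem_Fker, evalₐ_mk, Ideal.Quotient.eq_zero_iff_mem]

lemma val_mem_of_mk_mem_Fker {a : AdicCauchySequence I R} {s : ℕ}
    (h : AdicCompletion.mk I R a ∈ Fker I s) {n : ℕ} (hsn : s ≤ n) : a.val n ∈ I ^ s := by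
  have h1 : Ideal.Quotient.mk (I ^ s) (a.val n) = Ideal.Quotient.mk (I ^ s) (a.val s) :=
    AdicCompletion.Ideal.mk_eq_mk I hsn a
  rw [← Ideal.Quotient.eq_zero_iff_mem, h1, Ideal.Quotient.eq_zero_iff_mem]
  exact (mk_mem_Fker_iff I a s).mp h

lemma Fker_antitone : ∀ {m n : ℕ}, m ≤ n → Fker I n ≤ Fker I m := by
  intro m n hmn x hx
  obtain ⟨a, rfl⟩ := AdicCompletion.mk_surjective I R x
  rw [mk_mem_Fker_iff]
  have h1 : Ideal.Quotient.mk (I ^ m) (a.val m) = Ideal.Quotient.mk (I ^ m) (a.val n) :=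
    (AdicCompletion.Ideal.mk_eq_mk I hmn a).symm
  rw [← Ideal.Quotient.eq_zero_iff_mem, h1, Ideal.Quotient.eq_zero_iff_mem]
  exact Ideal.pow_le_pow_right hmn ((mk_mem_Fker_iff I a n).mp hx)

lemma Fker_mul (s t : ℕ) : Fker I s * Fker I t ≤ Fker I (s + t) := by
  rw [Ideal.mul_le]
  intro x hx y hy
  obtain ⟨a, rfl⟩ := AdicCompletion.mk_surjective I R x
  obtain ⟨b, rfl⟩ := AdicCompletion.mk_surjective I R y
  have hmul : AdicCompletion.mk I R a * AdicCompletion.mk I R b = AdicCompletion.mk I R (a * b) :=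
    rfl
  rw [hmul, mk_mem_Fker_iff]
  have ha : a.val (s + t) ∈ I ^ s := val_mem_of_mk_mem_Fker I hx (Nat.le_add_right s t)
  have hb : b.val (s + t) ∈ I ^ t := val_mem_of_mk_mem_Fker I hy (Nat.le_add_left t s)
  have : (a * b).val (s + t) = a.val (s + t) * b.val (s + t) := rfl
  rw [this, pow_add]
  exact Ideal.mul_mem_mul ha hb

lemma algebraMap_pow_mem_Fker {r : R} {n : ℕ} (hr : r ∈ I ^ n) :
    algebraMap R S r ∈ Fker I n := by
  rw [mem_Fker, AlgHom.commutes]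
  exact Ideal.Quotient.eq_zero_iff_mem.mpr hr

lemma Fker_approx {x : S} {n : ℕ} (hx : x ∈ Fker I n) :
    ∃ r ∈ I ^ n, x - algebraMap R S r ∈ Fker I (n + 1) := by
  obtain ⟨a, rfl⟩ := AdicCompletion.mk_surjective I R x
  refine ⟨a.val (n + 1), val_mem_of_mk_mem_Fker I hx (Nat.le_succ n), ?_⟩
  rw [mem_Fker, map_sub, evalₐ_mk, AlgHom.commutes, sub_eq_zero]
  rfl

lemma iInf_Fker : (⨅ n, Fker I n) = ⊥ := by
  rw [eq_bot_iff]
  intro x hx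
  rw [Submodule.mem_iInf] at hx
  rw [Submodule.mem_bot]
  apply AdicCompletion.ext
  intro n
  obtain ⟨a, rfl⟩ := AdicCompletion.mk_surjective I R x
  have han : a.val n ∈ I ^ n := val_mem_of_mk_mem_Fker I (hx n) le_rfl
  show Submodule.mkQ (I ^ n • ⊤ : Submodule R R) (a.val n) = (0 : S).val n
  have : (0 : S).val n = 0 := rfl
  rw [this, Submodule.mkQ_apply, Submodule.Quotient.mk_eq_zero]
  simpa using han

lemma mem_Fker_iff_val (x : S) (n : ℕ) : x ∈ Fker I n ↔ x.val n = 0 := by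
  have hev : evalₐ I n x =
      (Ideal.quotientEquivAlgOfEq R (by ext y; simp : (I ^ n • ⊤ : Ideal R) = I ^ n))
        ((AdicCompletion.eval I R n) x) := rfl
  rw [mem_Fker, hev, EmbeddingLike.map_eq_zero_iff, AdicCompletion.eval_apply]

lemma Fker_complete (x : ℕ → S) (hx : ∀ n, x (n + 1) - x n ∈ Fker I n) :
    ∃ y : S, ∀ n, y - x n ∈ Fker I n := by
  have key : ∀ m n : ℕ, m ≤ n → x n - x m ∈ Fker I m := by
    intro m n hmn
    induction n, hmn using Nat.le_induction with
    | base => simpa using (Fker I m).zero_mem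
    | succ n hmn ih =>
      have : x (n + 1) - x m = (x (n + 1) - x n) + (x n - x m) := by ring
      rw [this]
      exact add_mem (Fker_antitone I hmn (hx n)) ih
  have hval : ∀ m n : ℕ, m ≤ n → (x n).val m = (x m).val m := by
    intro m n hmn
    have := (mem_Fker_iff_val I _ m).mp (key m n hmn)
    have h2 : (x n - x m).val m = (x n).val m - (x m).val m := rfl
    rw [h2] at this
    linear_combination (norm := module) this
  refine ⟨⟨fun n => (x n).val n, ?_⟩, ?_⟩
  · intro m n hmn
    rw [(x n).property hmn, hval m n hmn]
  · intro n
    rw [mem_Fker_iff_val]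
    show (x n).val n - (x n).val n = 0
    simp

end Completion

section SpanHelper

lemma exists_finset_span_subset {T : Type*} [CommRing T] [IsNoetherianRing T] [DecidableEq T] (s : Set T) :
    ∃ w : Finset T, ↑w ⊆ s ∧ Ideal.span s ≤ Ideal.span (↑w : Set T) := by
  obtain ⟨G, hG⟩ := (IsNoetherian.noetherian (Ideal.span s))
  have hGs : ∀ g : {g // g ∈ G}, ∃ t : Finset T, ↑t ⊆ s ∧ (g : T) ∈ Submodule.span T (↑t : Set T) := by
    intro g
    have : (g : T) ∈ Ideal.span s := by
      rw [← hG]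
      exact Submodule.subset_span g.2
    exact Submodule.mem_span_finite_of_mem_span this
  choose t ht hmem using hGs
  refine ⟨G.attach.biUnion t, ?_, ?_⟩
  · intro a ha
    rw [Finset.coe_biUnion] at ha
    obtain ⟨g, hg, hag⟩ := Set.mem_iUnion₂.mp ha
    exact ht g hag
  · rw [← hG]
    rw [show (Ideal.span (↑(G.attach.biUnion t) : Set T) : Submodule T T) =
      Submodule.span T (↑(G.attach.biUnion t) : Set T) from rfl, Submodule.span_le]
    intro g hg
    have : g ∈ Submodule.span T (↑(t ⟨g, hg⟩) : Set T) := hmem ⟨g, hg⟩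
    refine Submodule.span_mono ?_ this
    intro a ha
    rw [Finset.coe_biUnion]
    exact Set.mem_iUnion₂.mpr ⟨⟨g, hg⟩, Finset.mem_attach _ _, ha⟩

end SpanHelper

section Closed

variable {R : Type*} [CommRing R] [IsNoetherianRing R] (I : Ideal R)

open AdicCompletion

local notation "S" => AdicCompletion I R

set_option synthInstance.maxHeartbeats 80000 in
theorem completion_closed (L : Ideal S) (x : S) (hx : ∀ n, x ∈ L ⊔ Fker I n) : x ∈ L := by
  classical
  haveI : DecidableEq (reesAlgebra I) := Classical.decEq _
  -- the "approximate initial form" ideals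
  let A : ℕ → Ideal R := fun s =>
    { carrier := {r | r ∈ I ^ s ∧
        algebraMap R S r ∈ (L ⊓ Fker I s) ⊔ Fker I (s + 1)},
      add_mem' := fun ha hb => ⟨add_mem ha.1 hb.1, by
        rw [_root_.map_add]; exact add_mem ha.2 hb.2⟩,
      zero_mem' := ⟨zero_mem _, by rw [_root_.map_zero]; exact zero_mem _⟩,
      smul_mem' := fun c r hr => ⟨Submodule.smul_mem _ c hr.1, by
        rw [smul_eq_mul, _root_.map_mul]
        exact Ideal.mul_mem_left _ _ hr.2⟩ }
  have hA_mem : ∀ {s r}, r ∈ A s ↔ (r ∈ I ^ s ∧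
      algebraMap R S r ∈ (L ⊓ Fker I s) ⊔ Fker I (s + 1)) := Iff.rfl
  -- the monomial set in the Rees algebra
  let MonSet : Set (reesAlgebra I) :=
    {p | ∃ s r, r ∈ A s ∧ (p : R[X]) = (Polynomial.monomial s) r}
  obtain ⟨w, hw_sub, hw_span⟩ := exists_finset_span_subset MonSet
  have hj : ∀ j : {p // p ∈ w}, ∃ s r, r ∈ A s ∧ ((j : reesAlgebra I) : R[X]) =
      (Polynomial.monomial s) r := fun j => hw_sub j.2
  choose d rr hArr hmono using hj
  -- the exact elements of L
  have hxi : ∀ j, ∃ u : S, u ∈ L ∧ u ∈ Fker I (d j) ∧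
      algebraMap R S (rr j) - u ∈ Fker I (d j + 1) := by
    intro j
    obtain ⟨u, hu, v, hv, huv⟩ := Submodule.mem_sup.mp (hArr j).2
    exact ⟨u, hu.1, hu.2, by rw [← huv]; simpa using hv⟩
  choose ξ hξL hξF hξdiff using hxi
  -- extraction of coefficients
  have hextract : ∀ s r, r ∈ A s → ∃ c : {p // p ∈ w} → R,
      (∀ j, c j ∈ I ^ (s - d j)) ∧ r = ∑ j, c j * rr j := by
    intro s r hr
    have hmon : ((Polynomial.monomial s) r : R[X]) ∈ reesAlgebra I :=
      reesAlgebra.monomial_mem.mpr hr.1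
    have hp : (⟨(Polynomial.monomial s) r, hmon⟩ : reesAlgebra I) ∈
        Ideal.span ((w : Set (reesAlgebra I))) :=
      hw_span (Ideal.subset_span ⟨s, r, hr, rfl⟩)
    rw [show (Ideal.span ((w : Set (reesAlgebra I))) : Submodule (reesAlgebra I) (reesAlgebra I))
      = Submodule.span (reesAlgebra I) ((w : Set (reesAlgebra I))) from rfl] at hp
    obtain ⟨q, -, hq⟩ := Submodule.mem_span_finset.mp hp
    -- pass to R[X]
    have hval : ((Polynomial.monomial s) r : R[X]) =
        ∑ j : {p // p ∈ w}, ((q (j : reesAlgebra I) : reesAlgebra I) : R[X]) *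
          (Polynomial.monomial (d j)) (rr j) := by
      simp only [smul_eq_mul] at hq
      have h1 : (reesAlgebra I).val (∑ i ∈ w, q i * i) = (Polynomial.monomial s) r :=
        congrArg (reesAlgebra I).val hq
      rw [map_sum] at h1
      have h1' : ∑ i ∈ w, (((q i : reesAlgebra I) : R[X]) * ((i : reesAlgebra I) : R[X]))
          = (Polynomial.monomial s) r := by
        rw [← h1]
        refine Finset.sum_congr rfl fun i _ => ?_
        rw [_root_.map_mul]
        rfl
      rw [← h1', Finset.univ_eq_attach, ← Finset.sum_attach w
        (fun p => ((q p : reesAlgebra I) : R[X]) * ((p : reesAlgebra I) : R[X]))]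
      refine Finset.sum_congr rfl fun j _ => ?_
      rw [hmono j]
    refine ⟨fun j => if d j ≤ s then ((q (j : reesAlgebra I) : reesAlgebra I) : R[X]).coeff (s - d j) else 0,
      ?_, ?_⟩
    · intro j
      dsimp only
      by_cases h : d j ≤ s
      · rw [if_pos h]
        exact (mem_reesAlgebra_iff I _).mp (q (j : reesAlgebra I)).2 (s - d j)
      · rw [if_neg h]
        rw [Nat.sub_eq_zero_of_le (le_of_not_ge h), pow_zero, Ideal.one_eq_top]
        trivial
    · have hcoeff := congrArg (fun p : R[X] => p.coeff s) hval
      rw [Polynomial.coeff_monomial, if_pos rfl, Polynomial.finset_sum_coeff] at hcoeff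
      rw [hcoeff]
      refine Finset.sum_congr rfl fun j _ => ?_
      rw [← Polynomial.C_mul_X_pow_eq_monomial, ← mul_assoc, Polynomial.coeff_mul_X_pow']
      dsimp only
      by_cases h : d j ≤ s
      · rw [if_pos h, if_pos h, Polynomial.coeff_mul_C]
      · rw [if_neg h, if_neg h, zero_mul]

  -- one step of successive approximation
  have hstep : ∀ s (z : S), z ∈ Fker I s → (∀ n, z ∈ L ⊔ Fker I n) →
      ∃ (c : {p // p ∈ w} → R) (z' : S), (∀ j, c j ∈ I ^ (s - d j)) ∧
        z' ∈ Fker I (s + 1) ∧ (∀ n, z' ∈ L ⊔ Fker I n) ∧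
        z = (∑ j, algebraMap R S (c j) * ξ j) + z' := by
    intro s z hzF hzL
    obtain ⟨r, hrI, hrF⟩ := Fker_approx I hzF
    have hrA : r ∈ A s := by
      refine ⟨hrI, ?_⟩
      obtain ⟨l, hl, e, he, hle⟩ := Submodule.mem_sup.mp (hzL (s + 1))
      have hlF : l ∈ Fker I s := by
        have hlze : l = z - e := by rw [← hle]; ring
        rw [hlze]
        exact sub_mem hzF (Fker_antitone I (Nat.le_succ s) he)
      refine Submodule.mem_sup.mpr ⟨l, ⟨hl, hlF⟩, e - (z - algebraMap R S r),
        sub_mem he hrF, by linear_combination hle⟩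
    obtain ⟨c, hcI, hcr⟩ := hextract s r hrA
    refine ⟨c, z - ∑ j, algebraMap R S (c j) * ξ j, hcI, ?_, ?_, by ring⟩
    · have hφr : algebraMap R S r = ∑ j, algebraMap R S (c j) * algebraMap R S (rr j) := by
        rw [hcr, map_sum]
        exact Finset.sum_congr rfl fun j _ => by rw [_root_.map_mul]
      have heq : z - ∑ j, algebraMap R S (c j) * ξ j
          = (z - algebraMap R S r) +
            ∑ j, algebraMap R S (c j) * (algebraMap R S (rr j) - ξ j) := by
        rw [hφr]
        simp only [mul_sub, Finset.sum_sub_distrib]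
        ring
      rw [heq]
      refine add_mem hrF (sum_mem fun j _ => ?_)
      have hmm : algebraMap R S (c j) * (algebraMap R S (rr j) - ξ j) ∈
          Fker I ((s - d j) + (d j + 1)) :=
        Fker_mul I _ _ (Ideal.mul_mem_mul (algebraMap_pow_mem_Fker I (hcI j)) (hξdiff j))
      exact Fker_antitone I (by omega) hmm
    · intro n
      exact sub_mem (hzL n)
        (Submodule.mem_sup_left (sum_mem fun j _ => Ideal.mul_mem_left _ _ (hξL j)))
  -- successive approximation
  choose stepc stepz hstepc hstepzF hstepzL hstepeq using hstep
  have hx0 : x ∈ Fker I 0 := by rw [Fker_zero]; trivial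
  let zseq : ∀ s : ℕ, {z : S // z ∈ Fker I s ∧ ∀ n, z ∈ L ⊔ Fker I n} := fun s =>
    Nat.rec ⟨x, hx0, hx⟩
      (fun s p => ⟨stepz s p.1 p.2.1 p.2.2,
        hstepzF s p.1 p.2.1 p.2.2, hstepzL s p.1 p.2.1 p.2.2⟩) s
  let cs : ℕ → {p // p ∈ w} → R := fun s => stepc s (zseq s).1 (zseq s).2.1 (zseq s).2.2
  have hzrec : ∀ s, (zseq s).1 =
      (∑ j, algebraMap R S (cs s j) * ξ j) + (zseq (s+1)).1 := fun s =>
    hstepeq s (zseq s).1 (zseq s).2.1 (zseq s).2.2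
  have hcsI : ∀ s j, cs s j ∈ I ^ (s - d j) := fun s j =>
    hstepc s (zseq s).1 (zseq s).2.1 (zseq s).2.2 j
  let Csum : ℕ → {p // p ∈ w} → R := fun s j => ∑ t ∈ Finset.range s, cs t j
  have hCsucc : ∀ s j, Csum (s + 1) j = Csum s j + cs s j := fun s j =>
    Finset.sum_range_succ _ _
  have hpartial : ∀ s, x = (∑ j, algebraMap R S (Csum s j) * ξ j) + (zseq s).1 := by
    intro s
    induction s with
    | zero =>
      have h0 : ∀ j, Csum 0 j = 0 := fun j => Finset.sum_range_zero _
      have : (∑ j, algebraMap R S (Csum 0 j) * ξ j) = 0 := by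
        refine Finset.sum_eq_zero fun j _ => ?_
        rw [h0 j, _root_.map_zero, zero_mul]
      rw [this, zero_add]
      rfl
    | succ s ih =>
      have hsum : (∑ j, algebraMap R S (Csum (s+1) j) * ξ j)
          = (∑ j, algebraMap R S (Csum s j) * ξ j) + ∑ j, algebraMap R S (cs s j) * ξ j := by
        rw [← Finset.sum_add_distrib]
        refine Finset.sum_congr rfl fun j _ => ?_
        rw [hCsucc s j, _root_.map_add, add_mul]
      rw [hsum]
      rw [ih, hzrec s]
      ring
  -- limits of the coefficient sequences
  have hconv : ∀ j : {p // p ∈ w}, ∃ γ : S,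
      ∀ t, γ - algebraMap R S (Csum (t + d j) j) ∈ Fker I t := by
    intro j
    apply Fker_complete I (fun t => algebraMap R S (Csum (t + d j) j))
    intro t
    have hdiff : Csum (t + 1 + d j) j - Csum (t + d j) j = cs (t + d j) j := by
      rw [show t + 1 + d j = (t + d j) + 1 by omega, hCsucc]
      ring
    have : algebraMap R S (Csum (t + 1 + d j) j) - algebraMap R S (Csum (t + d j) j)
        = algebraMap R S (cs (t + d j) j) := by
      rw [← map_sub, hdiff]
    rw [this]
    have := hcsI (t + d j) j
    rw [Nat.add_sub_cancel] at this
    exact algebraMap_pow_mem_Fker I this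
  choose γ hγ using hconv
  have hfinal : x - ∑ j, γ j * ξ j = 0 := by
    have hmem : x - ∑ j, γ j * ξ j ∈ ⨅ n, Fker I n := by
      rw [Submodule.mem_iInf]
      intro n
      set D := (Finset.univ : Finset {p // p ∈ w}).sup d with hD
      set s := n + D with hs
      have hds : ∀ j, d j ≤ s := fun j =>
        le_trans (Finset.le_sup (Finset.mem_univ j)) (Nat.le_add_left D n)
      have hdecomp : x - ∑ j, γ j * ξ j =
          (zseq s).1 + ∑ j, (algebraMap R S (Csum s j) - γ j) * ξ j := by
        rw [hpartial s]
        simp only [sub_mul, Finset.sum_sub_distrib]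
        ring
      rw [hdecomp]
      refine add_mem (Fker_antitone I (Nat.le_add_right n D) (zseq s).2.1)
        (sum_mem fun j _ => ?_)
      have h1 : algebraMap R S (Csum s j) - γ j ∈ Fker I (s - d j) := by
        have h1' := hγ j (s - d j)
        rw [Nat.sub_add_cancel (hds j)] at h1'
        have := neg_mem h1'
        simpa using this
      have h2 : (algebraMap R S (Csum s j) - γ j) * ξ j ∈ Fker I ((s - d j) + d j) :=
        Fker_mul I _ _ (Ideal.mul_mem_mul h1 (hξF j))
      rw [Nat.sub_add_cancel (hds j)] at h2
      exact Fker_antitone I (Nat.le_add_right n D) h2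
    rw [iInf_Fker] at hmem
    simpa using hmem
  have hxeq : x = ∑ j, γ j * ξ j := sub_eq_zero.mp hfinal
  rw [hxeq]
  exact sum_mem fun j _ => Ideal.mul_mem_left _ _ (hξL j)

end Closed

section Main

open AdicCompletion

variable {A B : Type*} [CommRing A] [CommRing B]

lemma descend_le {σ : A →+* B} (hσ : Function.Surjective σ) {X Y : Ideal A}
    (h : Ideal.map σ X = Ideal.map σ Y) : Y ≤ X ⊔ RingHom.ker σ := by
  intro y hy
  have h1 : y ∈ Ideal.comap σ (Ideal.map σ X) := by
    rw [Ideal.mem_comap, h]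
    exact Ideal.mem_map_of_mem σ hy
  rw [Ideal.comap_map_of_surjective σ hσ X] at h1
  have h2 : Ideal.comap σ (⊥ : Ideal B) = RingHom.ker σ := rfl
  rwa [h2] at h1

/-- The ideal-level translation of the Dedekind–Mertens identity under a ring map. -/
lemma dm_ideal_map (σ : A →+* B) (f g : A[X]) (k : ℕ) :
    Ideal.map σ (cont (f * g) * cont f ^ (k - 1)) =
      cont (f.map σ * g.map σ) * cont (f.map σ) ^ (k - 1) ∧
    Ideal.map σ (cont f ^ k * cont g) = cont (f.map σ) ^ k * cont (g.map σ) := by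
  constructor
  · rw [Ideal.map_mul, Ideal.map_pow, ← cont_map, ← cont_map, Polynomial.map_mul]
  · rw [Ideal.map_mul, Ideal.map_pow, ← cont_map, ← cont_map]

variable {R : Type*} [CommRing R] [IsNoetherianRing R] [IsLocalRing R]

local notation "mR" => IsLocalRing.maximalIdeal R
local notation "S" => AdicCompletion mR R

lemma evalₐ_comp_algebraMap (s : ℕ) :
    ((evalₐ mR s : S →ₐ[R] R ⧸ mR ^ s) : S →+* R ⧸ mR ^ s).comp (algebraMap R S) =
      Ideal.Quotient.mk (mR ^ s) := by
  ext r
  show evalₐ mR s (algebraMap R S r) = Ideal.Quotient.mk (mR ^ s) r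
  rw [AlgHom.commutes]
  rfl

lemma map_map_eval (p : R[X]) (s : ℕ) :
    (p.map (algebraMap R S)).map ((evalₐ mR s : S →ₐ[R] R ⧸ mR ^ s) : S →+* R ⧸ mR ^ s) =
      p.map (Ideal.Quotient.mk (mR ^ s)) := by
  rw [Polynomial.map_map, evalₐ_comp_algebraMap]

lemma dm_R_iff_quot (g : R[X]) (k : ℕ) (hk : 0 < k) :
    DM R g k ↔ ∀ s : ℕ, DM (R ⧸ mR ^ s) (g.map (Ideal.Quotient.mk (mR ^ s))) k := by
  constructor
  · intro h s
    exact h.map_surj _ Ideal.Quotient.mk_surjective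
  · intro h f
    refine le_antisymm (DM.easy_le hk f) ?_
    refine closed_of_forall_sup fun s => ?_
    have hmap : Ideal.map (Ideal.Quotient.mk (mR ^ s)) (cont (f * g) * cont f ^ (k - 1)) =
        Ideal.map (Ideal.Quotient.mk (mR ^ s)) (cont f ^ k * cont g) := by
      rw [(dm_ideal_map (Ideal.Quotient.mk (mR ^ s)) f g k).1,
        (dm_ideal_map (Ideal.Quotient.mk (mR ^ s)) f g k).2]
      exact h s (f.map (Ideal.Quotient.mk (mR ^ s)))
    have := descend_le Ideal.Quotient.mk_surjective hmap
    rwa [Ideal.mk_ker] at this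

lemma dm_S_iff_quot (g : R[X]) (k : ℕ) (hk : 0 < k) :
    DM S (g.map (algebraMap R S)) k ↔
      ∀ s : ℕ, DM (R ⧸ mR ^ s) (g.map (Ideal.Quotient.mk (mR ^ s))) k := by
  constructor
  · intro h s
    have := h.map_surj ((evalₐ mR s : S →ₐ[R] R ⧸ mR ^ s) : S →+* R ⧸ mR ^ s)
      (evalₐ_surjective mR s)
    rwa [map_map_eval] at this
  · intro h f
    refine le_antisymm (DM.easy_le hk f) ?_
    intro x hx
    refine completion_closed mR _ x fun s => ?_
    have hmap : Ideal.map ((evalₐ mR s : S →ₐ[R] R ⧸ mR ^ s) : S →+* R ⧸ mR ^ s)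
          (cont (f * g.map (algebraMap R S)) * cont f ^ (k - 1)) =
        Ideal.map ((evalₐ mR s : S →ₐ[R] R ⧸ mR ^ s) : S →+* R ⧸ mR ^ s)
          (cont f ^ k * cont (g.map (algebraMap R S))) := by
      rw [(dm_ideal_map _ f (g.map (algebraMap R S)) k).1,
        (dm_ideal_map _ f (g.map (algebraMap R S)) k).2, map_map_eval]
      exact h s (f.map _)
    exact descend_le (evalₐ_surjective mR s) hmap hx

theorem dmNumber_completion' (g : R[X]) :
    dmNumber R g =
      dmNumber (AdicCompletion (IsLocalRing.maximalIdeal R) R)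
        (g.map (algebraMap R (AdicCompletion (IsLocalRing.maximalIdeal R) R))) := by
  unfold dmNumber
  congr 1
  ext k
  simp only [Set.mem_setOf_eq]
  constructor
  · rintro ⟨hk, h⟩
    exact ⟨hk, (dm_S_iff_quot g k hk).mpr ((dm_R_iff_quot g k hk).mp h)⟩
  · rintro ⟨hk, h⟩
    exact ⟨hk, (dm_R_iff_quot g k hk).mpr ((dm_S_iff_quot g k hk).mp h)⟩

end Main

/-- Proposition 4.1 (Dedekind--Mertens part): the Dedekind--Mertens number of `g` over a
Noetherian local ring `R` equals the Dedekind--Mertens number of `g` over the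
`m`-adic completion of `R`. -/
theorem dmNumber_completion {R : Type*} [CommRing R] [IsNoetherianRing R] [IsLocalRing R]
    (g : R[X]) :
    dmNumber R g =
      dmNumber (AdicCompletion (IsLocalRing.maximalIdeal R) R)
        (g.map (algebraMap R (AdicCompletion (IsLocalRing.maximalIdeal R) R))) :=
  dmNumber_completion' g
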